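/- Let X follow the delay exponential distribution with parameters μ > 0, τ ≥ 0, 0 < μτ < 1/e. Then E[X] = 1/μ and Var(X) = (1 - 2μτ)/μ². -/

import Mathlib

open Real Set MeasureTheory

noncomputable def dexp (μ τ t : ℝ) : ℝ :=
  ∑' n : ℕ, (-μ) ^ n * (t - n * τ) ^ n / (Nat.factorial n) * (if (n : ℝ) * τ ≤ t then 1 else 0)

namespace DexpProof

variable {μ τ : ℝ}

noncomputable def term (μ τ : ℝ) (n : ℕ) (t : ℝ) : ℝ :=
  (-μ) ^ n * (t - n * τ) ^ n / (Nat.factorial n) * (if (n : ℝ) * τ ≤ t then 1 else 0)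

noncomputable def psum (μ τ : ℝ) (N : ℕ) (t : ℝ) : ℝ := ∑ n ∈ Finset.range N, term μ τ n t

lemma dexp_eq_tsum (μ τ t : ℝ) : dexp μ τ t = ∑' n, term μ τ n t := rfl

lemma term_eq_zero_of_lt {n : ℕ} {t : ℝ} (h : t < n * τ) : term μ τ n t = 0 := by
  simp [term, if_neg (not_le.mpr h)]

lemma dexp_eq_sum (hτ : 0 ≤ τ) {N : ℕ} {t : ℝ} (ht : t < N * τ) :
    dexp μ τ t = psum μ τ N t := by
  rw [dexp_eq_tsum, psum]
  refine tsum_eq_sum fun n hn => term_eq_zero_of_lt (lt_of_lt_of_le ht ?_)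
  have hN : (N : ℝ) ≤ n := by
    exact_mod_cast Nat.le_of_not_lt (by simpa using hn)
  exact mul_le_mul_of_nonneg_right hN hτ

lemma dexp_of_neg (hτ : 0 ≤ τ) {t : ℝ} (ht : t < 0) : dexp μ τ t = 0 := by
  rw [dexp_eq_sum hτ (N := 0) (by simpa using ht)]
  simp [psum]

lemma dexp_of_lt (hτ : 0 < τ) {t : ℝ} (h0 : 0 ≤ t) (h1 : t < τ) : dexp μ τ t = 1 := by
  rw [dexp_eq_sum hτ.le (N := 1) (by simpa using h1)]
  simp [psum, term, h0]

lemma dexp_Icc (hτ : 0 < τ) {t : ℝ} (h0 : τ ≤ t) (h1 : t ≤ 2 * τ) :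
    dexp μ τ t = 1 - μ * (t - τ) := by
  have h0' : (0:ℝ) ≤ t := le_trans hτ.le h0
  rw [dexp_eq_sum hτ.le (N := 3) (by push_cast; linarith)]
  rw [psum, Finset.sum_range_succ, Finset.sum_range_succ, Finset.sum_range_one]
  simp only [term]
  push_cast
  rw [if_pos (by linarith : (0:ℝ) * τ ≤ t), if_pos (by linarith : (1:ℝ) * τ ≤ t)]
  by_cases h2 : (2:ℝ) * τ ≤ t
  · have ht2 : t = 2 * τ := le_antisymm h1 (by linarith)
    rw [if_pos h2, ht2]
    norm_num [Nat.factorial]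
    ring
  · rw [if_neg h2]
    norm_num [Nat.factorial]
    ring

lemma dexp_zero (hτ : 0 < τ) : dexp μ τ 0 = 1 := dexp_of_lt hτ le_rfl hτ

lemma dexp_tau (hτ : 0 < τ) : dexp μ τ τ = 1 := by
  rw [dexp_Icc hτ le_rfl (by linarith)]; ring

lemma dexp_two_tau (hτ : 0 < τ) : dexp μ τ (2 * τ) = 1 - μ * τ := by
  rw [dexp_Icc hτ (by linarith) le_rfl]; ring

lemma term_succ_max (n : ℕ) (t : ℝ) :
    term μ τ (n + 1) t
      = (-μ) ^ (n + 1) * max (t - ((n + 1 : ℕ) : ℝ) * τ) 0 ^ (n + 1) / (Nat.factorial (n + 1)) := by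
  by_cases h : ((n + 1 : ℕ) : ℝ) * τ ≤ t
  · rw [term, if_pos h, max_eq_left (by linarith)]; ring
  · rw [term, if_neg h, max_eq_right (by push_cast at h ⊢; linarith)]
    simp


lemma continuous_term_succ (n : ℕ) : Continuous (term μ τ (n + 1)) := by
  have : term μ τ (n + 1) = fun t =>
      (-μ) ^ (n + 1) * max (t - ((n + 1 : ℕ) : ℝ) * τ) 0 ^ (n + 1) / (Nat.factorial (n + 1)) :=
    funext fun t => term_succ_max n t
  rw [this]
  exact Continuous.div_const (continuous_const.mul
    (((continuous_id.sub continuous_const).max continuous_const).pow _)) _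

lemma exists_N (hτ : 0 < τ) (t : ℝ) : ∃ M : ℕ, t < ((M + 1 : ℕ) : ℝ) * τ := by
  obtain ⟨M, hM⟩ := exists_nat_gt (t / τ)
  refine ⟨M, ?_⟩
  have : t / τ < ((M + 1 : ℕ) : ℝ) := by push_cast; linarith
  calc t = t / τ * τ := by field_simp
  _ < ((M + 1 : ℕ) : ℝ) * τ := by
      exact mul_lt_mul_of_pos_right this hτ

lemma continuousOn_dexp (hτ : 0 < τ) : ContinuousOn (dexp μ τ) (Ici 0) := by
  intro t ht
  obtain ⟨M, hM⟩ := exists_N hτ t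
  have hmem : Iio (((M + 1 : ℕ) : ℝ) * τ) ∈ nhdsWithin t (Ici 0) :=
    mem_nhdsWithin_of_mem_nhds (Iio_mem_nhds hM)
  have hps : ContinuousWithinAt (psum μ τ (M + 1)) (Ici 0) t := by
    have h1 : ∀ n ∈ Finset.range (M + 1), ContinuousWithinAt (term μ τ n) (Ici 0) t := by
      intro n _
      match n with
      | 0 =>
        refine (continuousWithinAt_const (b := (1:ℝ))).congr (fun s hs => ?_) ?_
        · simp [term, mem_Ici.mp hs]
        · simp [term, mem_Ici.mp ht]
      | (m + 1) => exact (continuous_term_succ m).continuousWithinAt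
    exact tendsto_finset_sum _ fun n hn => (h1 n hn).tendsto
  refine hps.congr_of_eventuallyEq ?_ (dexp_eq_sum hτ.le hM)
  exact Filter.eventually_of_mem hmem fun s hs => dexp_eq_sum hτ.le hs

lemma measurable_term (n : ℕ) : Measurable (term μ τ n) := by
  apply Measurable.mul
  · exact (measurable_const.mul ((measurable_id.sub_const _).pow_const _)).div_const _
  · exact Measurable.ite (measurableSet_le measurable_const measurable_id)
      measurable_const measurable_const

lemma measurable_dexp (hτ : 0 < τ) : Measurable (dexp μ τ) := by
  apply measurable_of_tendsto_metrizable (f := fun N => psum μ τ N)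
  · exact fun N => Finset.measurable_sum _ fun n _ => measurable_term n
  · rw [tendsto_pi_nhds]
    intro t
    obtain ⟨M, hM⟩ := exists_N hτ t
    refine tendsto_const_nhds.congr' ?_
    filter_upwards [Filter.eventually_ge_atTop (M + 1)] with N hN
    refine dexp_eq_sum hτ.le (lt_of_lt_of_le hM ?_)
    exact mul_le_mul_of_nonneg_right (by exact_mod_cast hN) hτ.le

lemma term_zero_deriv {t : ℝ} (ht : 0 < t) :
    HasDerivWithinAt (term μ τ 0) 0 (Ioi t) t := by
  refine ((hasDerivAt_const t (1:ℝ)).hasDerivWithinAt).congr (fun s hs => ?_) ?_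
  · have : (0:ℝ) ≤ s := le_of_lt (lt_trans ht (mem_Ioi.mp hs))
    simp [term, this]
  · simp [term, ht.le]

lemma term_succ_deriv (hτ : 0 < τ) (n : ℕ) {t : ℝ} (ht : 0 < t) :
    HasDerivWithinAt (term μ τ (n + 1)) (-μ * term μ τ n (t - τ)) (Ioi t) t := by
  set a : ℝ := ((n + 1 : ℕ) : ℝ) * τ with ha
  rcases lt_or_ge t a with h | h
  · -- term is 0 near t, and the claimed derivative is 0
    have hval : -μ * term μ τ n (t - τ) = 0 := by
      rw [term_eq_zero_of_lt (by push_cast [ha] at h ⊢; linarith), mul_zero]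
    rw [hval]
    refine ((hasDerivAt_const t (0:ℝ)).hasDerivWithinAt).congr_of_eventuallyEq ?_ ?_
    · filter_upwards [mem_nhdsWithin_of_mem_nhds (Iio_mem_nhds h)] with s hs
      exact term_eq_zero_of_lt hs
    · exact term_eq_zero_of_lt h
  · -- t ≥ a : polynomial regime
    have hp : HasDerivAt (fun s : ℝ => (-μ) ^ (n + 1) * (s - a) ^ (n + 1) / (Nat.factorial (n + 1)))
        ((-μ) ^ (n + 1) * (t - a) ^ n / (Nat.factorial n)) t := by
      have h1 : HasDerivAt (fun s : ℝ => (s - a) ^ (n + 1))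
          ((n + 1 : ℕ) * (t - a) ^ n * 1) t := by
        have := ((hasDerivAt_id t).sub_const a).pow (n + 1)
        refine this.congr_deriv ?_
        simp
      have h2 := (h1.const_mul ((-μ) ^ (n + 1))).div_const ((Nat.factorial (n + 1) : ℝ))
      refine h2.congr_deriv ?_
      have hfac : ((Nat.factorial (n + 1) : ℝ)) = (n + 1 : ℕ) * (Nat.factorial n : ℝ) := by
        rw [Nat.factorial_succ]; push_cast; ring
      rw [hfac]
      have h3 : ((Nat.factorial n : ℝ)) ≠ 0 := Nat.cast_ne_zero.mpr (Nat.factorial_ne_zero n)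
      have h4 : ((n:ℝ) + 1) ≠ 0 := by positivity
      field_simp
    have hderiv : HasDerivWithinAt (term μ τ (n + 1))
        ((-μ) ^ (n + 1) * (t - a) ^ n / (Nat.factorial n)) (Ioi t) t := by
      refine hp.hasDerivWithinAt.congr (fun s hs => ?_) ?_
      · have hsa : a ≤ s := le_trans h (le_of_lt (mem_Ioi.mp hs))
        rw [term, if_pos hsa, mul_one, ha]
      · rw [term, if_pos h, mul_one, ha]
    convert hderiv using 1
    have hind : ((n:ℝ)) * τ ≤ t - τ := by push_cast [ha] at h ⊢; linarith
    rw [term, if_pos hind, mul_one]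
    have : t - τ - (n:ℝ) * τ = t - a := by push_cast [ha]; ring
    rw [this]
    ring

lemma dexp_hasDerivWithinAt (hτ : 0 < τ) {t : ℝ} (ht : 0 < t) :
    HasDerivWithinAt (dexp μ τ) (-μ * dexp μ τ (t - τ)) (Ioi t) t := by
  obtain ⟨M, hM⟩ := exists_N hτ t
  have hsum : HasDerivWithinAt (psum μ τ (M + 1)) (-μ * dexp μ τ (t - τ)) (Ioi t) t := by
    have heq : psum μ τ (M + 1) = fun s => (∑ n ∈ Finset.range M, term μ τ (n + 1) s)
        + term μ τ 0 s := by
      funext s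
      rw [psum, Finset.sum_range_succ']
    rw [heq]
    have hd : HasDerivWithinAt
        (fun s => ∑ n ∈ Finset.range M, term μ τ (n + 1) s)
        (∑ n ∈ Finset.range M, -μ * term μ τ n (t - τ)) (Ioi t) t :=
      HasDerivWithinAt.fun_sum fun n _ => term_succ_deriv hτ n ht
    have := hd.add (term_zero_deriv (μ := μ) (τ := τ) ht)
    rw [add_zero] at this
    refine this.congr_deriv ?_
    rw [← Finset.mul_sum]
    have htM : t - τ < (M : ℝ) * τ := by push_cast at hM ⊢; linarith
    rw [dexp_eq_sum hτ.le htM, psum]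
  refine hsum.congr_of_eventuallyEq ?_ (dexp_eq_sum hτ.le hM)
  filter_upwards [mem_nhdsWithin_of_mem_nhds (Iio_mem_nhds hM)] with s hs
  exact dexp_eq_sum hτ.le hs


lemma exists_bound (hτ : 0 < τ) (b : ℝ) :
    ∃ C, 0 ≤ C ∧ ∀ s, s ≤ b → |dexp μ τ s| ≤ C := by
  obtain ⟨C, hC⟩ := (isCompact_Icc (a := (0:ℝ)) (b := max b 0)).exists_bound_of_continuousOn
    ((continuousOn_dexp hτ).mono (Icc_subset_Ici_self))
  refine ⟨max C 0, le_max_right _ _, fun s hs => ?_⟩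
  rcases lt_or_ge s 0 with h | h
  · rw [dexp_of_neg hτ.le h]; simpa using le_max_right C 0
  · exact le_trans (hC s ⟨h, le_max_of_le_left hs⟩) (le_max_left _ _)

lemma intervalIntegrable_shift (hτ : 0 < τ) (c a b : ℝ) :
    IntervalIntegrable (fun s => dexp μ τ (s + c)) volume a b := by
  obtain ⟨C, _, hC⟩ := exists_bound hτ (max a b + c)
  rw [intervalIntegrable_iff]
  apply Measure.integrableOn_of_bounded (M := C)
  · exact (measure_Ioc_lt_top).ne
  · exact ((measurable_dexp hτ).comp (measurable_id.add_const c)).aestronglyMeasurable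
  · refine (ae_restrict_iff' measurableSet_uIoc).mpr (Filter.Eventually.of_forall fun s hs => ?_)
    have hsm : s ≤ max a b := hs.2
    exact hC _ (by linarith)

lemma intervalIntegrable_shift' (hτ : 0 < τ) (c a b : ℝ) :
    IntervalIntegrable (fun s => dexp μ τ (s - c)) volume a b := by
  have h5 := intervalIntegrable_shift (μ := μ) hτ (-c) a b
  have h6 : (fun s => dexp μ τ (s + -c)) = fun s => dexp μ τ (s - c) := by
    funext s; rw [sub_eq_add_neg]
  rwa [h6] at h5

lemma integral_eq (hτ : 0 < τ) {a b : ℝ} (h0 : 0 ≤ a) (hab : a ≤ b) :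
    dexp μ τ b - dexp μ τ a = ∫ s in a..b, -μ * dexp μ τ (s - τ) := by
  rw [intervalIntegral.integral_eq_sub_of_hasDeriv_right_of_le hab
    ((continuousOn_dexp hτ).mono (fun x hx => le_trans h0 hx.1))
    (fun x hx => dexp_hasDerivWithinAt hτ (lt_of_le_of_lt h0 hx.1))
    (by
      have h5 := (intervalIntegrable_shift (μ := μ) hτ (-τ) a b).const_mul (-μ)
      have h6 : (fun s => -μ * dexp μ τ (s + -τ)) = fun s => -μ * dexp μ τ (s - τ) := by
        funext s; rw [sub_eq_add_neg]
      rwa [h6] at h5)]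

lemma abs_dexp_le_one_aux (hμ : 0 < μ) (hτ : 0 < τ) (hq : μ * τ < 1) {t : ℝ}
    (h0 : 0 ≤ t) (h2 : t ≤ 2 * τ) : |dexp μ τ t| ≤ 1 := by
  rcases lt_or_ge t τ with h | h
  · rw [dexp_of_lt hτ h0 h]; norm_num
  · rw [dexp_Icc hτ h h2, abs_le]
    constructor
    · nlinarith [mul_le_mul_of_nonneg_left (by linarith : t - τ ≤ τ) hμ.le]
    · nlinarith [mul_nonneg hμ.le (by linarith : (0:ℝ) ≤ t - τ)]

lemma abs_dexp_le_one (hμ : 0 < μ) (hτ : 0 < τ) (hq : μ * τ < 1) (t : ℝ) :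
    |dexp μ τ t| ≤ 1 := by
  rcases lt_or_ge t 0 with h | h
  · rw [dexp_of_neg hτ.le h]; norm_num
  rcases le_or_gt t (2 * τ) with h2 | h2
  · exact abs_dexp_le_one_aux hμ hτ hq h h2
  by_contra hgt
  push_neg at hgt
  set A : Set ℝ := {s | 2 * τ < s ∧ 1 < |dexp μ τ s|} with hA
  have hne : A.Nonempty := ⟨t, h2, hgt⟩
  have hbdd : BddBelow A := ⟨2 * τ, fun s hs => hs.1.le⟩
  set T := sInf A with hT
  have hT2 : 2 * τ ≤ T := le_csInf hne fun s hs => hs.1.le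
  have hTpos : 0 < T := lt_of_lt_of_le (by positivity) hT2
  have hcont : ContinuousAt (dexp μ τ) T :=
    (continuousOn_dexp hτ).continuousAt (Ici_mem_nhds hTpos)
  have hlt : ∀ s, s < T → |dexp μ τ s| ≤ 1 := by
    intro s hs
    rcases lt_or_ge s 0 with h' | h'
    · rw [dexp_of_neg hτ.le h']; norm_num
    rcases le_or_gt s (2 * τ) with h'' | h''
    · exact abs_dexp_le_one_aux hμ hτ hq h' h''
    · by_contra hgt'
      push_neg at hgt'
      exact absurd (csInf_le hbdd ⟨h'', hgt'⟩) (not_le.mpr hs)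
  have hleT : |dexp μ τ T| ≤ 1 := by
    rcases eq_or_lt_of_le hT2 with he | hlt2
    · exact he ▸ abs_dexp_le_one_aux hμ hτ hq (by positivity) le_rfl
    · haveI hne2 : (nhdsWithin T (Iio T)).NeBot := nhdsLT_neBot T
      exact le_of_tendsto ((hcont.continuousWithinAt (s := Iio T)).tendsto).abs
        (Filter.eventually_of_mem self_mem_nhdsWithin fun s hs => hlt s hs)
  have hgeT : 1 ≤ |dexp μ τ T| := by
    have hclos : T ∈ closure A := csInf_mem_closure hne hbdd
    haveI hne3 : (nhdsWithin T A).NeBot := mem_closure_iff_nhdsWithin_neBot.mp hclos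
    exact ge_of_tendsto ((hcont.continuousWithinAt (s := A)).tendsto).abs
      (Filter.eventually_of_mem self_mem_nhdsWithin fun s hs => le_of_lt hs.2)
  have habs : |dexp μ τ T| = 1 := le_antisymm hleT hgeT
  set σ : ℝ := dexp μ τ T with hσ
  have hσ2 : σ * σ = 1 := by
    have := abs_mul_abs_self σ
    rw [habs] at this; linarith
  have hleT' : ∀ s, s ≤ T → |dexp μ τ s| ≤ 1 := by
    intro s hs
    rcases lt_or_eq_of_le hs with h' | h'
    · exact hlt s h'
    · rw [h']; exact habs.le
  -- claim 1 : backward lower bound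
  have claim1 : ∀ s ∈ Icc (T - τ) T, 1 - μ * (T - s) ≤ σ * dexp μ τ s := by
    intro s hs
    have hs0 : 0 ≤ s := by have := hs.1; linarith
    have hid := integral_eq (μ := μ) hτ hs0 hs.2
    have hbound : ‖∫ u in s..T, -μ * dexp μ τ (u - τ)‖ ≤ μ * (T - s) := by
      have := intervalIntegral.norm_integral_le_of_norm_le_const (C := μ)
        (f := fun u => -μ * dexp μ τ (u - τ)) (a := s) (b := T) ?_
      · calc ‖∫ u in s..T, -μ * dexp μ τ (u - τ)‖ ≤ μ * |T - s| := this
        _ = μ * (T - s) := by rw [abs_of_nonneg (by linarith [hs.2])]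
      · intro u hu
        rw [uIoc_of_le hs.2] at hu
        have : |dexp μ τ (u - τ)| ≤ 1 := hleT' _ (by linarith [hu.2])
        rw [norm_mul, norm_neg, Real.norm_eq_abs, Real.norm_eq_abs, abs_of_pos hμ]
        nlinarith [abs_nonneg (dexp μ τ (u - τ))]
    have h1 : |dexp μ τ T - dexp μ τ s| ≤ μ * (T - s) := by
      rw [hid]; exact hbound
    have h2 : σ * (dexp μ τ T - dexp μ τ s) ≤ μ * (T - s) := by
      calc σ * (dexp μ τ T - dexp μ τ s) ≤ |σ * (dexp μ τ T - dexp μ τ s)| := le_abs_self _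
      _ = |σ| * |dexp μ τ T - dexp μ τ s| := abs_mul _ _
      _ ≤ 1 * (μ * (T - s)) := by
          refine mul_le_mul habs.le h1 (abs_nonneg _) zero_le_one
      _ = μ * (T - s) := one_mul _
    nlinarith [hσ2]
  -- claim 2 : no escape on (T, T+τ]
  have claim2 : ∀ u ∈ Ioc T (T + τ), |dexp μ τ u| ≤ 1 := by
    intro u hu
    have hid := integral_eq (μ := μ) hτ hTpos.le hu.1.le
    set I' : ℝ := ∫ s in T..u, σ * dexp μ τ (s - τ) with hI'
    have hint : IntervalIntegrable (fun s => σ * dexp μ τ (s - τ)) volume T u :=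
      (intervalIntegrable_shift' hτ τ T u).const_mul σ
    have hkey : σ * dexp μ τ u = 1 - μ * I' := by
      have e1 : σ * (dexp μ τ u - dexp μ τ T) = σ * ∫ s in T..u, -μ * dexp μ τ (s - τ) := by
        rw [← hid]
      have e2 : σ * ∫ s in T..u, -μ * dexp μ τ (s - τ) = -μ * I' := by
        rw [hI', intervalIntegral.integral_const_mul, intervalIntegral.integral_const_mul]
        ring
      have e3 : σ * dexp μ τ T = 1 := hσ2
      rw [e2] at e1
      rw [mul_sub, e3] at e1
      linarith
    have hlow : (u - T) * (1 - μ * τ) ≤ I' := by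
      have := intervalIntegral.integral_mono_on hu.1.le
        (intervalIntegrable_const (c := 1 - μ * τ)) hint ?_
      · rw [intervalIntegral.integral_const, smul_eq_mul] at this
        exact this
      · intro x hx
        have hx1 : x - τ ∈ Icc (T - τ) T := ⟨by linarith [hx.1], by linarith [hx.2, hu.2]⟩
        have := claim1 _ hx1
        have h7 : μ * (T - (x - τ)) ≤ μ * τ := by
          apply mul_le_mul_of_nonneg_left _ hμ.le
          linarith [hx.1]
        linarith
    have hup : I' ≤ u - T := by
      have := intervalIntegral.integral_mono_on hu.1.le hint
        (intervalIntegrable_const (c := (1:ℝ))) ?_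
      · rw [intervalIntegral.integral_const, smul_eq_mul, mul_one] at this
        exact this
      · intro x hx
        have h8 : |dexp μ τ (x - τ)| ≤ 1 := hleT' _ (by linarith [hx.2, hu.2])
        calc σ * dexp μ τ (x - τ) ≤ |σ * dexp μ τ (x - τ)| := le_abs_self _
        _ = |σ| * |dexp μ τ (x - τ)| := abs_mul _ _
        _ ≤ 1 * 1 := mul_le_mul habs.le h8 (abs_nonneg _) zero_le_one
        _ = 1 := one_mul _
    have huT : u - T ≤ τ := by linarith [hu.2]
    have habs_u : |σ * dexp μ τ u| ≤ 1 := by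
      rw [hkey, abs_le]
      constructor
      · have : μ * I' ≤ μ * (u - T) := mul_le_mul_of_nonneg_left hup hμ.le
        nlinarith [hu.1.le]
      · have : μ * ((u - T) * (1 - μ * τ)) ≤ μ * I' := mul_le_mul_of_nonneg_left hlow hμ.le
        nlinarith [hu.1.le]
    rwa [abs_mul, habs, one_mul] at habs_u
  obtain ⟨a, haA, halt⟩ := exists_lt_of_csInf_lt hne (show sInf A < T + τ by rw [← hT]; linarith)
  have haT : T ≤ a := csInf_le hbdd haA
  have hane : T ≠ a := by
    intro he
    have h9 := haA.2
    rw [← he] at h9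
    exact absurd h9 (not_lt.mpr habs.le)
  exact absurd (claim2 a ⟨lt_of_le_of_ne haT hane, halt.le⟩) (not_le.mpr haA.2)


lemma contraction (hμ : 0 < μ) (hτ : 0 < τ) (hq : μ * τ < 1) {M b t : ℝ} (hM : 0 ≤ M)
    (hb : 2 * τ ≤ b) (hbound : ∀ s, b - 2 * τ ≤ s → |dexp μ τ s| ≤ M)
    (ht : b + Real.log (2 / (1 - μ * τ)) / μ ≤ t) :
    |dexp μ τ t| ≤ (1 + μ * τ) / 2 * M := by
  have hq1 : 0 < 1 - μ * τ := by linarith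
  have hΔ0 : 0 ≤ Real.log (2 / (1 - μ * τ)) / μ := by
    apply div_nonneg _ hμ.le
    apply Real.log_nonneg
    rw [le_div_iff₀ hq1]; nlinarith [mul_pos hμ hτ]
  have hbt : b ≤ t := by linarith
  have hbpos : 0 < b := by linarith
  set G : ℝ → ℝ := fun s => Real.exp (μ * s) * dexp μ τ s with hG
  set D : ℝ → ℝ := fun x => Real.exp (μ * x) * μ * dexp μ τ x
      + Real.exp (μ * x) * (-μ * dexp μ τ (x - τ)) with hD
  have hIcc0 : Icc b t ⊆ Ici (0:ℝ) := fun x hx => le_trans hbpos.le hx.1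
  have hexp : ∀ x : ℝ, HasDerivAt (fun s => Real.exp (μ * s)) (Real.exp (μ * x) * μ) x := by
    intro x
    have h1 : HasDerivAt (fun s : ℝ => μ * s) (μ * 1) x := (hasDerivAt_id x).const_mul μ
    have := (Real.hasDerivAt_exp (μ * x)).comp x h1
    rw [mul_one] at this; exact this
  have hDeriv : ∀ x ∈ Ioo b t, HasDerivWithinAt G (D x) (Ioi x) x := by
    intro x hx
    exact (hexp x).hasDerivWithinAt.mul
      (dexp_hasDerivWithinAt hτ (lt_of_lt_of_le hbpos hx.1.le))
  have hcexp : Continuous fun x : ℝ => Real.exp (μ * x) :=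
    Real.continuous_exp.comp (continuous_const.mul continuous_id)
  have hcontdex : ContinuousOn (fun x => dexp μ τ (x - τ)) (Icc b t) := by
    apply (continuousOn_dexp hτ).comp
      (Continuous.continuousOn (continuous_id.sub continuous_const))
    intro x hx
    exact mem_Ici.mpr (by show 0 ≤ x - τ; linarith [hx.1])
  have hcontG : ContinuousOn G (Icc b t) :=
    hcexp.continuousOn.mul ((continuousOn_dexp hτ).mono hIcc0)
  have hcontD : ContinuousOn D (Icc b t) := by
    apply ContinuousOn.add
    · exact ((hcexp.mul continuous_const).continuousOn).mul ((continuousOn_dexp hτ).mono hIcc0)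
    · exact hcexp.continuousOn.mul (continuousOn_const.mul hcontdex)
  have hIntD : IntervalIntegrable D volume b t := by
    apply ContinuousOn.intervalIntegrable
    rwa [uIcc_of_le hbt]
  have hFTC : ∫ x in b..t, D x = G t - G b :=
    intervalIntegral.integral_eq_sub_of_hasDeriv_right_of_le hbt hcontG hDeriv hIntD
  have hDbound : ∀ x ∈ Icc b t, ‖D x‖ ≤ μ ^ 2 * τ * M * Real.exp (μ * x) := by
    intro x hx
    have hx2 : 0 ≤ x - τ := by linarith [hx.1]
    have hide := integral_eq (μ := μ) hτ hx2 (by linarith : x - τ ≤ x)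
    have hnorm : |dexp μ τ x - dexp μ τ (x - τ)| ≤ μ * M * τ := by
      rw [hide, ← Real.norm_eq_abs]
      have hbd := intervalIntegral.norm_integral_le_of_norm_le_const (C := μ * M)
        (f := fun s => -μ * dexp μ τ (s - τ)) (a := x - τ) (b := x) ?_
      · calc ‖∫ s in (x - τ)..x, -μ * dexp μ τ (s - τ)‖ ≤ μ * M * |x - (x - τ)| := hbd
        _ = μ * M * τ := by rw [show x - (x - τ) = τ by ring, abs_of_pos hτ]
      · intro s hs
        rw [uIoc_of_le (by linarith : x - τ ≤ x)] at hs
        have h8 : |dexp μ τ (s - τ)| ≤ M := hbound _ (by linarith [hs.1, hx.1])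
        rw [norm_mul, norm_neg, Real.norm_eq_abs, Real.norm_eq_abs, abs_of_pos hμ]
        exact mul_le_mul_of_nonneg_left h8 hμ.le
    have hDx : D x = μ * Real.exp (μ * x) * (dexp μ τ x - dexp μ τ (x - τ)) := by
      rw [hD]; ring
    rw [hDx, Real.norm_eq_abs, abs_mul, abs_mul, abs_of_pos hμ, abs_of_pos (Real.exp_pos _)]
    calc μ * Real.exp (μ * x) * |dexp μ τ x - dexp μ τ (x - τ)|
        ≤ μ * Real.exp (μ * x) * (μ * M * τ) :=
          mul_le_mul_of_nonneg_left hnorm (by positivity)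
      _ = μ ^ 2 * τ * M * Real.exp (μ * x) := by ring
  have hbig : ‖G t - G b‖ ≤ μ * τ * M * (Real.exp (μ * t) - Real.exp (μ * b)) := by
    rw [← hFTC]
    have h1 : ‖∫ x in b..t, D x‖ ≤ ∫ x in b..t, ‖D x‖ :=
      intervalIntegral.norm_integral_le_integral_norm hbt
    have hcN : IntervalIntegrable (fun x => μ ^ 2 * τ * M * Real.exp (μ * x)) volume b t := by
      apply ContinuousOn.intervalIntegrable
      exact (continuous_const.mul hcexp).continuousOn
    have h2 : ∫ x in b..t, ‖D x‖ ≤ ∫ x in b..t, μ ^ 2 * τ * M * Real.exp (μ * x) := by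
      apply intervalIntegral.integral_mono_on hbt hIntD.norm hcN
      exact hDbound
    have h3 : ∫ x in b..t, μ ^ 2 * τ * M * Real.exp (μ * x)
        = μ * τ * M * (Real.exp (μ * t) - Real.exp (μ * b)) := by
      have hanti : ∀ x ∈ uIcc b t,
          HasDerivAt (fun y => μ * τ * M * Real.exp (μ * y)) (μ ^ 2 * τ * M * Real.exp (μ * x)) x := by
        intro x _
        have := (hexp x).const_mul (μ * τ * M)
        rw [show μ ^ 2 * τ * M * Real.exp (μ * x) = μ * τ * M * (Real.exp (μ * x) * μ) by ring]
        exact this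
      rw [intervalIntegral.integral_eq_sub_of_hasDerivAt hanti hcN]
      ring
    linarith
  have hGb : |G b| ≤ Real.exp (μ * b) * M := by
    rw [hG]
    simp only []
    rw [abs_mul, abs_of_pos (Real.exp_pos _)]
    exact mul_le_mul_of_nonneg_left (hbound b (by linarith)) (Real.exp_pos _).le
  have hGt : |G t| ≤ Real.exp (μ * b) * M + μ * τ * M * (Real.exp (μ * t) - Real.exp (μ * b)) := by
    have h5 : |G t| - |G b| ≤ |G t - G b| := abs_sub_abs_le_abs_sub _ _
    rw [← Real.norm_eq_abs (G t - G b)] at h5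
    linarith
  have hdexp_t : |dexp μ τ t| * Real.exp (μ * t) = |G t| := by
    rw [hG]
    simp only []
    rw [abs_mul, abs_of_pos (Real.exp_pos _)]
    ring
  have hexp_le : Real.exp (μ * b - μ * t) ≤ (1 - μ * τ) / 2 := by
    have h5 : μ * (Real.log (2 / (1 - μ * τ)) / μ) = Real.log (2 / (1 - μ * τ)) := by
      rw [mul_div_assoc']
      exact mul_div_cancel_left₀ _ hμ.ne'
    have h4 : μ * b - μ * t ≤ -Real.log (2 / (1 - μ * τ)) := by
      nlinarith [mul_le_mul_of_nonneg_left ht hμ.le]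
    calc Real.exp (μ * b - μ * t) ≤ Real.exp (-Real.log (2 / (1 - μ * τ))) :=
          Real.exp_le_exp.mpr h4
      _ = (1 - μ * τ) / 2 := by
          rw [Real.exp_neg, Real.exp_log (by positivity), inv_div]
  have heb : Real.exp (μ * b) = Real.exp (μ * b - μ * t) * Real.exp (μ * t) := by
    rw [← Real.exp_add]; ring_nf
  have hept : (0:ℝ) < Real.exp (μ * t) := Real.exp_pos _
  have hfin : |dexp μ τ t| * Real.exp (μ * t) ≤ (1 + μ * τ) / 2 * M * Real.exp (μ * t) := by
    rw [hdexp_t]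
    have h6 : Real.exp (μ * b) ≤ (1 - μ * τ) / 2 * Real.exp (μ * t) := by
      rw [heb]
      exact mul_le_mul_of_nonneg_right hexp_le hept.le
    have h7 : 0 < Real.exp (μ * b) := Real.exp_pos _
    nlinarith [mul_le_mul_of_nonneg_right h6 hM, mul_nonneg (mul_nonneg hμ.le hτ.le) (mul_nonneg hM h7.le)]
    
  exact le_of_mul_le_mul_right hfin hept


lemma geom_decay (hμ : 0 < μ) (hτ : 0 < τ) (hq : μ * τ < 1) :
    ∀ (k : ℕ) (t : ℝ), (k : ℝ) * (2 * τ + Real.log (2 / (1 - μ * τ)) / μ) ≤ t →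
      |dexp μ τ t| ≤ ((1 + μ * τ) / 2) ^ k := by
  have hq1 : 0 < 1 - μ * τ := by linarith
  have hΔ0 : 0 ≤ Real.log (2 / (1 - μ * τ)) / μ := by
    apply div_nonneg _ hμ.le
    apply Real.log_nonneg
    rw [le_div_iff₀ hq1]; nlinarith [mul_pos hμ hτ]
  intro k
  induction k with
  | zero => intro t _; simpa using abs_dexp_le_one hμ hτ hq t
  | succ n ih =>
    intro t htk
    have hrn : (0:ℝ) ≤ ((1 + μ * τ) / 2) ^ n := by positivity
    have hres := contraction hμ hτ hq (M := ((1 + μ * τ) / 2) ^ n) (t := t)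
      (b := (n : ℝ) * (2 * τ + Real.log (2 / (1 - μ * τ)) / μ) + 2 * τ) hrn
      (by nlinarith [Nat.cast_nonneg (α := ℝ) n]) ?_ ?_
    · calc |dexp μ τ t| ≤ (1 + μ * τ) / 2 * ((1 + μ * τ) / 2) ^ n := hres
      _ = ((1 + μ * τ) / 2) ^ (n + 1) := by rw [pow_succ]; ring
    · intro s hs
      exact ih s (by linarith)
    · push_cast at htk
      linarith

lemma decay (hμ : 0 < μ) (hτ : 0 < τ) (hq : μ * τ < 1) :
    ∃ C ε : ℝ, 0 < C ∧ 0 < ε ∧ ∀ t, 0 ≤ t → |dexp μ τ t| ≤ C * Real.exp (-ε * t) := by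
  have hq0 : 0 < μ * τ := mul_pos hμ hτ
  have hq1 : 0 < 1 - μ * τ := by linarith
  set ρ : ℝ := (1 + μ * τ) / 2 with hρdef
  have hρ0 : 0 < ρ := by positivity
  have hρ1 : ρ < 1 := by rw [hρdef]; linarith
  have hlogρ : Real.log ρ < 0 := Real.log_neg hρ0 hρ1
  set P : ℝ := 2 * τ + Real.log (2 / (1 - μ * τ)) / μ with hPdef
  have hΔ0 : 0 ≤ Real.log (2 / (1 - μ * τ)) / μ := by
    apply div_nonneg _ hμ.le
    apply Real.log_nonneg
    rw [le_div_iff₀ hq1]; nlinarith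
  have hPpos : 0 < P := by rw [hPdef]; linarith
  refine ⟨ρ⁻¹, -Real.log ρ / P, by positivity, div_pos (by linarith) hPpos, ?_⟩
  intro t ht
  set k := Nat.floor (t / P) with hk
  have htP : 0 ≤ t / P := div_nonneg ht hPpos.le
  have hk1 : (k : ℝ) * P ≤ t := by
    have h1 : (k : ℝ) ≤ t / P := Nat.floor_le htP
    calc (k : ℝ) * P ≤ t / P * P := mul_le_mul_of_nonneg_right h1 hPpos.le
    _ = t := by field_simp
  have hk2 : t / P - 1 ≤ (k : ℝ) := by
    have := Nat.lt_floor_add_one (t / P)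
    linarith
  have hg := geom_decay hμ hτ hq k t hk1
  have hgoal : ρ ^ k ≤ ρ⁻¹ * Real.exp (-(-Real.log ρ / P) * t) := by
    have e1 : ρ ^ k = Real.exp ((k : ℝ) * Real.log ρ) := by
      rw [← Real.exp_log hρ0, ← Real.exp_nat_mul, Real.exp_log hρ0]
    have e2 : (k : ℝ) * Real.log ρ ≤ (t / P - 1) * Real.log ρ :=
      mul_le_mul_of_nonpos_right hk2 hlogρ.le
    have e3 : Real.exp ((t / P - 1) * Real.log ρ)
        = ρ⁻¹ * Real.exp (-(-Real.log ρ / P) * t) := by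
      rw [show (t / P - 1) * Real.log ρ = -Real.log ρ + (-(-Real.log ρ / P) * t) by
        field_simp; ring]
      rw [Real.exp_add, Real.exp_neg, Real.exp_log hρ0]
    rw [e1, ← e3]
    exact Real.exp_le_exp.mpr e2
  exact le_trans hg hgoal

lemma tendsto_pow_mul (hμ : 0 < μ) (hτ : 0 < τ) (hq : μ * τ < 1) (k : ℕ) {c : ℝ} (hc : 0 ≤ c) :
    Filter.Tendsto (fun b : ℝ => b ^ k * dexp μ τ (b + c)) Filter.atTop (nhds 0) := by
  obtain ⟨C, ε, hC, hε, hd⟩ := decay hμ hτ hq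
  apply squeeze_zero_norm' (a := fun b => C * (b ^ k * Real.exp (-ε * b)))
  · filter_upwards [Filter.eventually_ge_atTop (0:ℝ)] with b hb
    rw [norm_mul, Real.norm_eq_abs, Real.norm_eq_abs, abs_of_nonneg (pow_nonneg hb k)]
    have h1 : |dexp μ τ (b + c)| ≤ C * Real.exp (-ε * (b + c)) := hd _ (by linarith)
    have h2 : Real.exp (-ε * (b + c)) ≤ Real.exp (-ε * b) :=
      Real.exp_le_exp.mpr (by nlinarith)
    calc b ^ k * |dexp μ τ (b + c)|
        ≤ b ^ k * (C * Real.exp (-ε * b)) :=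
          mul_le_mul_of_nonneg_left
            (le_trans h1 (mul_le_mul_of_nonneg_left h2 hC.le)) (pow_nonneg hb k)
      _ = C * (b ^ k * Real.exp (-ε * b)) := by ring
  · have h3 : Filter.Tendsto (fun b : ℝ => b ^ k * Real.exp (-ε * b)) Filter.atTop (nhds 0) := by
      apply (tendsto_rpow_mul_exp_neg_mul_atTop_nhds_zero (k : ℝ) ε hε).congr'
      filter_upwards [Filter.eventually_ge_atTop (0:ℝ)] with b hb
      rw [Real.rpow_natCast]
    simpa using h3.const_mul C

lemma tendsto_shift (hμ : 0 < μ) (hτ : 0 < τ) (hq : μ * τ < 1) {c : ℝ} (hc : 0 ≤ c) :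
    Filter.Tendsto (fun b : ℝ => dexp μ τ (b + c)) Filter.atTop (nhds 0) := by
  have := tendsto_pow_mul hμ hτ hq 0 hc
  simpa using this


lemma shift_hasDerivWithinAt (hτ : 0 < τ) {c t : ℝ} (hc : 0 ≤ c) (ht : 0 < t) :
    HasDerivWithinAt (fun s => dexp μ τ (s + c)) (-μ * dexp μ τ (t + c - τ)) (Ioi t) t := by
  have h1 := dexp_hasDerivWithinAt (μ := μ) hτ (show 0 < t + c by linarith)
  have h2 : HasDerivWithinAt (fun s : ℝ => s + c) 1 (Ioi t) t :=
    ((hasDerivAt_id t).add_const c).hasDerivWithinAt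
  have hmap : MapsTo (fun s : ℝ => s + c) (Ioi t) (Ioi (t + c)) := by
    intro s hs
    simp only [mem_Ioi] at *
    linarith
  have h3 := HasDerivWithinAt.comp t h1 h2 hmap
  rw [mul_one] at h3; exact h3

lemma intervalIntegrable_dexp (hτ : 0 < τ) (a b : ℝ) :
    IntervalIntegrable (dexp μ τ) volume a b := by
  have := intervalIntegrable_shift' (μ := μ) hτ 0 a b
  simpa using this

lemma K0 (hμ : 0 < μ) (hτ : 0 < τ) {b : ℝ} (hb : 0 ≤ b) :
    ∫ t in (0:ℝ)..b, dexp μ τ t = (1 - dexp μ τ (b + τ)) / μ := by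
  have hderiv : ∀ x ∈ Ioo 0 b,
      HasDerivWithinAt (fun t => -μ⁻¹ * dexp μ τ (t + τ)) (dexp μ τ x) (Ioi x) x := by
    intro x hx
    have h1 := (shift_hasDerivWithinAt (μ := μ) hτ hτ.le hx.1).const_mul (-μ⁻¹)
    have h2 : -μ⁻¹ * (-μ * dexp μ τ (x + τ - τ)) = dexp μ τ x := by
      rw [show x + τ - τ = x by ring]
      field_simp
    rwa [h2] at h1
  have hcont : ContinuousOn (fun t => -μ⁻¹ * dexp μ τ (t + τ)) (Icc 0 b) := by
    apply continuousOn_const.mul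
    apply (continuousOn_dexp hτ).comp (Continuous.continuousOn (continuous_id.add continuous_const))
    intro x hx
    simp only [id_eq, mem_Ici, Pi.add_apply]
    have := hx.1
    linarith
  rw [intervalIntegral.integral_eq_sub_of_hasDeriv_right_of_le hb hcont hderiv
    (intervalIntegrable_dexp hτ 0 b)]
  rw [show (0:ℝ) + τ = τ by ring, dexp_tau hτ]
  field_simp
  ring

lemma K1 (hμ : 0 < μ) (hτ : 0 < τ) {b : ℝ} (hb : 0 ≤ b) :
    ∫ t in (0:ℝ)..b, t * (μ * dexp μ τ (t - τ))
      = (∫ t in (0:ℝ)..b, dexp μ τ t) - b * dexp μ τ b := by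
  have hint1 : IntervalIntegrable (fun x => μ * dexp μ τ (x - τ)) volume 0 b :=
    (intervalIntegrable_shift' hτ τ 0 b).const_mul μ
  have hint2 : IntervalIntegrable (fun x => x * (μ * dexp μ τ (x - τ))) volume 0 b :=
    hint1.continuousOn_mul continuous_id.continuousOn
  have hint3 : IntervalIntegrable (fun x => dexp μ τ x + x * (-μ * dexp μ τ (x - τ))) volume 0 b := by
    apply (intervalIntegrable_dexp hτ 0 b).add
    have h4 : IntervalIntegrable (fun x => -μ * dexp μ τ (x - τ)) volume 0 b :=
      (intervalIntegrable_shift' hτ τ 0 b).const_mul (-μ)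
    exact h4.continuousOn_mul continuous_id.continuousOn
  have hFTC : ∫ x in (0:ℝ)..b, (dexp μ τ x + x * (-μ * dexp μ τ (x - τ)))
      = b * dexp μ τ b - 0 * dexp μ τ 0 := by
    apply intervalIntegral.integral_eq_sub_of_hasDeriv_right_of_le hb
    · exact continuous_id.continuousOn.mul ((continuousOn_dexp hτ).mono (fun x hx => hx.1))
    · intro x hx
      have h1 := (hasDerivAt_id x).hasDerivWithinAt.mul
        (dexp_hasDerivWithinAt (μ := μ) hτ hx.1)
      simp only [id_eq] at h1
      have h2 : 1 * dexp μ τ x + x * (-μ * dexp μ τ (x - τ))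
          = dexp μ τ x + x * (-μ * dexp μ τ (x - τ)) := by ring
      rwa [h2] at h1
    · exact hint3
  have e1 : ∀ x : ℝ, x * (μ * dexp μ τ (x - τ))
      = dexp μ τ x - (dexp μ τ x + x * (-μ * dexp μ τ (x - τ))) := by intro x; ring
  rw [intervalIntegral.integral_congr (g := fun x => dexp μ τ x
    - (dexp μ τ x + x * (-μ * dexp μ τ (x - τ)))) (fun x _ => e1 x)]
  rw [intervalIntegral.integral_sub (intervalIntegrable_dexp hτ 0 b) hint3, hFTC]
  ring

lemma K2 (hμ : 0 < μ) (hτ : 0 < τ) {b : ℝ} (hb : 0 ≤ b) :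
    ∫ t in (0:ℝ)..b, t ^ 2 * (μ * dexp μ τ (t - τ))
      = 2 * (∫ t in (0:ℝ)..b, t * dexp μ τ t) - b ^ 2 * dexp μ τ b := by
  have hint1 : IntervalIntegrable (fun x => x * dexp μ τ x) volume 0 b := by
    apply ContinuousOn.intervalIntegrable
    rw [uIcc_of_le hb]
    exact continuous_id.continuousOn.mul ((continuousOn_dexp hτ).mono (fun x hx => hx.1))
  have hint3 : IntervalIntegrable
      (fun x => ((2:ℕ):ℝ) * x ^ 1 * dexp μ τ x + x ^ 2 * (-μ * dexp μ τ (x - τ))) volume 0 b := by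
    apply IntervalIntegrable.add
    · apply ContinuousOn.intervalIntegrable
      rw [uIcc_of_le hb]
      exact ((continuous_const.mul (continuous_pow 1)).continuousOn).mul
        ((continuousOn_dexp hτ).mono (fun x hx => hx.1))
    · exact ((intervalIntegrable_shift' hτ τ 0 b).const_mul (-μ)).continuousOn_mul
        (continuous_pow 2).continuousOn
  have hFTC : ∫ x in (0:ℝ)..b, (((2:ℕ):ℝ) * x ^ 1 * dexp μ τ x + x ^ 2 * (-μ * dexp μ τ (x - τ)))
      = b ^ 2 * dexp μ τ b - 0 ^ 2 * dexp μ τ 0 := by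
    apply intervalIntegral.integral_eq_sub_of_hasDeriv_right_of_le hb
    · exact (continuous_pow 2).continuousOn.mul ((continuousOn_dexp hτ).mono (fun x hx => hx.1))
    · intro x hx
      exact (hasDerivAt_pow 2 x).hasDerivWithinAt.mul (dexp_hasDerivWithinAt (μ := μ) hτ hx.1)
    · exact hint3
  have e1 : ∀ x : ℝ, x ^ 2 * (μ * dexp μ τ (x - τ))
      = 2 * (x * dexp μ τ x)
        - (((2:ℕ):ℝ) * x ^ 1 * dexp μ τ x + x ^ 2 * (-μ * dexp μ τ (x - τ))) := by
    intro x; push_cast; ring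
  rw [intervalIntegral.integral_congr (g := fun x => 2 * (x * dexp μ τ x)
    - (((2:ℕ):ℝ) * x ^ 1 * dexp μ τ x + x ^ 2 * (-μ * dexp μ τ (x - τ)))) (fun x _ => e1 x)]
  rw [intervalIntegral.integral_sub (hint1.const_mul 2) hint3, hFTC,
    intervalIntegral.integral_const_mul]
  ring

lemma K1' (hμ : 0 < μ) (hτ : 0 < τ) {b : ℝ} (hb : 0 ≤ b) :
    ∫ t in (0:ℝ)..b, t * dexp μ τ t
      = (1 - μ * τ) / μ ^ 2 - b / μ * dexp μ τ (b + τ) - dexp μ τ (b + 2 * τ) / μ ^ 2 := by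
  set f : ℝ → ℝ := fun t => -μ⁻¹ * (t * dexp μ τ (t + τ)) - (μ⁻¹) ^ 2 * dexp μ τ (t + 2 * τ)
    with hf
  have hderiv : ∀ x ∈ Ioo 0 b, HasDerivWithinAt f (x * dexp μ τ x) (Ioi x) x := by
    intro x hx
    have h1 : HasDerivWithinAt (fun t => t * dexp μ τ (t + τ))
        (1 * dexp μ τ (x + τ) + x * (-μ * dexp μ τ (x + τ - τ))) (Ioi x) x :=
      by
        have := (hasDerivAt_id x).hasDerivWithinAt.mul
          (shift_hasDerivWithinAt (μ := μ) hτ hτ.le hx.1)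
        exact this
    have h2 : HasDerivWithinAt (fun t => dexp μ τ (t + 2 * τ))
        (-μ * dexp μ τ (x + 2 * τ - τ)) (Ioi x) x :=
      shift_hasDerivWithinAt (μ := μ) hτ (by linarith) hx.1
    have h3 := ((h1.const_mul (-μ⁻¹)).sub (h2.const_mul ((μ⁻¹) ^ 2)))
    have h4 : -μ⁻¹ * (1 * dexp μ τ (x + τ) + x * (-μ * dexp μ τ (x + τ - τ)))
        - (μ⁻¹) ^ 2 * (-μ * dexp μ τ (x + 2 * τ - τ)) = x * dexp μ τ x := by
      rw [show x + τ - τ = x by ring, show x + 2 * τ - τ = x + τ by ring]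
      field_simp
      ring
    rwa [h4] at h3
  have hcont : ContinuousOn f (Icc 0 b) := by
    have hc1 : ContinuousOn (fun t => dexp μ τ (t + τ)) (Icc 0 b) := by
      apply (continuousOn_dexp hτ).comp
        (Continuous.continuousOn (continuous_id.add continuous_const))
      intro x hx
      simp only [id_eq, mem_Ici, Pi.add_apply]
      linarith [hx.1]
    have hc2 : ContinuousOn (fun t => dexp μ τ (t + 2 * τ)) (Icc 0 b) := by
      apply (continuousOn_dexp hτ).comp
        (Continuous.continuousOn (continuous_id.add continuous_const))
      intro x hx
      simp only [id_eq, mem_Ici, Pi.add_apply]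
      linarith [hx.1]
    exact (continuousOn_const.mul (continuous_id.continuousOn.mul hc1)).sub
      (continuousOn_const.mul hc2)
  have hint : IntervalIntegrable (fun x => x * dexp μ τ x) volume 0 b := by
    apply ContinuousOn.intervalIntegrable
    rw [uIcc_of_le hb]
    exact continuous_id.continuousOn.mul ((continuousOn_dexp hτ).mono (fun x hx => hx.1))
  rw [intervalIntegral.integral_eq_sub_of_hasDeriv_right_of_le hb hcont hderiv hint]
  rw [hf]
  simp only []
  rw [show (0:ℝ) + 2 * τ = 2 * τ by ring, dexp_two_tau hτ]
  field_simp
  ring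

lemma integrableOn_density (hμ : 0 < μ) (hτ : 0 < τ) (hq : μ * τ < 1) (k : ℕ) :
    IntegrableOn (fun t => t ^ k * (μ * dexp μ τ (t - τ))) (Ioi (0:ℝ)) := by
  obtain ⟨C, ε, hC, hε, hd⟩ := decay hμ hτ hq
  have hbase : IntegrableOn (fun t : ℝ => t ^ ((k:ℝ)) * Real.exp (-ε * t ^ (1:ℝ))) (Ioi 0) :=
    integrableOn_rpow_mul_exp_neg_mul_rpow (lt_of_lt_of_le (by norm_num) (Nat.cast_nonneg k)) zero_lt_one hε
  have hbase' : IntegrableOn (fun t : ℝ => t ^ k * Real.exp (-ε * t)) (Ioi 0) := by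
    apply hbase.congr_fun ?_ measurableSet_Ioi
    intro x _
    simp only [Real.rpow_natCast, Real.rpow_one]
  apply Integrable.mono' (hbase'.const_mul (C * μ * Real.exp (ε * τ)))
  · exact ((measurable_id.pow_const k).mul
      (measurable_const.mul ((measurable_dexp hτ).comp (measurable_id.sub_const τ)))).aestronglyMeasurable
  · rw [ae_restrict_iff' measurableSet_Ioi]
    apply Filter.Eventually.of_forall
    intro t ht
    have ht0 : 0 < t := ht
    rcases lt_or_ge t τ with h | h
    · rw [dexp_of_neg hτ.le (by linarith : t - τ < 0)]
      simp only [mul_zero, zero_mul, norm_zero]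
      positivity
    · have h1 : |dexp μ τ (t - τ)| ≤ C * Real.exp (-ε * (t - τ)) := hd _ (by linarith)
      have h2 : Real.exp (-ε * (t - τ)) = Real.exp (ε * τ) * Real.exp (-ε * t) := by
        rw [← Real.exp_add]; ring_nf
      rw [norm_mul, norm_mul, Real.norm_eq_abs, Real.norm_eq_abs, Real.norm_eq_abs,
        abs_of_nonneg (pow_nonneg ht0.le k), abs_of_pos hμ]
      calc t ^ k * (μ * |dexp μ τ (t - τ)|)
          ≤ t ^ k * (μ * (C * (Real.exp (ε * τ) * Real.exp (-ε * t)))) := by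
            apply mul_le_mul_of_nonneg_left _ (pow_nonneg ht0.le k)
            apply mul_le_mul_of_nonneg_left _ hμ.le
            rw [← h2]
            exact h1
        _ = C * μ * Real.exp (ε * τ) * (t ^ k * Real.exp (-ε * t)) := by ring

end DexpProof


open DexpProof Filter

/-- A delay-exponentially distributed random variable `X` (with density
`ψ(t) = μ dexp(-μ(t-τ); -μτ)` on `[0, ∞)`) has mean `E[X] = 1/μ` and variance
`Var(X) = E[X²] - E[X]² = (1 - 2μτ)/μ²`. -/
theorem dexp_mean_and_variance (μ τ : ℝ) (hμ : 0 < μ) (hτ : 0 ≤ τ)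
    (hμτ0 : 0 < μ * τ) (hμτ : μ * τ < (Real.exp 1)⁻¹) :
    (∫ t in Ioi (0 : ℝ), t * (μ * dexp μ τ (t - τ))) = μ⁻¹ ∧
    (∫ t in Ioi (0 : ℝ), t ^ 2 * (μ * dexp μ τ (t - τ)))
        - (∫ t in Ioi (0 : ℝ), t * (μ * dexp μ τ (t - τ))) ^ 2
      = (1 - 2 * μ * τ) / μ ^ 2 := by
  have hτ0 : 0 < τ := by
    rcases lt_trichotomy τ 0 with h | h | h
    · nlinarith [mul_neg_of_pos_of_neg hμ h]
    · rw [h, mul_zero] at hμτ0; exact absurd hμτ0 (lt_irrefl 0)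
    · exact h
  have hexp1 : 1 < Real.exp 1 := by
    have := Real.add_one_lt_exp (x := 1) (by norm_num)
    linarith
  have hq : μ * τ < 1 := lt_trans hμτ (by
    rw [inv_lt_one_iff₀]
    right
    exact hexp1)
  -- first moment
  have t1 : Tendsto (fun b : ℝ => dexp μ τ (b + τ)) atTop (nhds 0) :=
    tendsto_shift hμ hτ0 hq hτ0.le
  have t2 : Tendsto (fun b : ℝ => b * dexp μ τ b) atTop (nhds 0) := by
    have := tendsto_pow_mul hμ hτ0 hq 1 (le_refl (0:ℝ))
    simpa using this
  have c1 : Tendsto (fun _ : ℝ => (1:ℝ)) atTop (nhds (1:ℝ)) := tendsto_const_nhds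
  have hL1tail : Tendsto (fun b : ℝ => (1 - dexp μ τ (b + τ)) / μ - b * dexp μ τ b)
      atTop (nhds μ⁻¹) := by
    have h := ((c1.sub t1).div_const μ).sub t2
    have hval : (1 - 0) / μ - 0 = μ⁻¹ := by rw [sub_zero, sub_zero, one_div]
    rwa [hval] at h
  have hE1 : Tendsto (fun b : ℝ => ∫ t in (0:ℝ)..b, t * (μ * dexp μ τ (t - τ)))
      atTop (nhds μ⁻¹) := by
    refine Filter.Tendsto.congr' ?_ hL1tail
    filter_upwards [eventually_ge_atTop (0:ℝ)] with b hb
    rw [K1 hμ hτ0 hb, K0 hμ hτ0 hb]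
  have hInt1 : IntegrableOn (fun t => t * (μ * dexp μ τ (t - τ))) (Ioi (0:ℝ)) := by
    have := integrableOn_density hμ hτ0 hq 1
    simpa using this
  have hI1 : (∫ t in Ioi (0 : ℝ), t * (μ * dexp μ τ (t - τ))) = μ⁻¹ :=
    tendsto_nhds_unique (intervalIntegral_tendsto_integral_Ioi 0 hInt1 tendsto_id) hE1
  -- second moment
  have t3 : Tendsto (fun b : ℝ => b * dexp μ τ (b + τ)) atTop (nhds 0) := by
    have := tendsto_pow_mul hμ hτ0 hq 1 hτ0.le
    simpa using this
  have t4 : Tendsto (fun b : ℝ => dexp μ τ (b + 2 * τ)) atTop (nhds 0) :=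
    tendsto_shift hμ hτ0 hq (by linarith)
  have t5 : Tendsto (fun b : ℝ => b ^ 2 * dexp μ τ b) atTop (nhds 0) := by
    have := tendsto_pow_mul hμ hτ0 hq 2 (le_refl (0:ℝ))
    simpa using this
  have c2 : Tendsto (fun _ : ℝ => (1 - μ * τ) / μ ^ 2) atTop (nhds ((1 - μ * τ) / μ ^ 2)) :=
    tendsto_const_nhds
  have hL2tail : Tendsto (fun b : ℝ =>
      2 * ((1 - μ * τ) / μ ^ 2 - b / μ * dexp μ τ (b + τ) - dexp μ τ (b + 2 * τ) / μ ^ 2)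
        - b ^ 2 * dexp μ τ b) atTop (nhds (2 * (1 - μ * τ) / μ ^ 2)) := by
    have h := (((c2.sub (t3.const_mul μ⁻¹)).sub (t4.div_const (μ ^ 2))).const_mul 2).sub t5
    have heq : ∀ b : ℝ,
        2 * ((1 - μ * τ) / μ ^ 2 - μ⁻¹ * (b * dexp μ τ (b + τ)) - dexp μ τ (b + 2 * τ) / μ ^ 2)
          - b ^ 2 * dexp μ τ b
        = 2 * ((1 - μ * τ) / μ ^ 2 - b / μ * dexp μ τ (b + τ) - dexp μ τ (b + 2 * τ) / μ ^ 2)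
          - b ^ 2 * dexp μ τ b := by
      intro b; ring
    have hval : 2 * ((1 - μ * τ) / μ ^ 2 - μ⁻¹ * 0 - 0 / μ ^ 2) - 0
        = 2 * (1 - μ * τ) / μ ^ 2 := by ring
    rw [hval] at h
    exact h.congr heq
  have hE2 : Tendsto (fun b : ℝ => ∫ t in (0:ℝ)..b, t ^ 2 * (μ * dexp μ τ (t - τ)))
      atTop (nhds (2 * (1 - μ * τ) / μ ^ 2)) := by
    refine Filter.Tendsto.congr' ?_ hL2tail
    filter_upwards [eventually_ge_atTop (0:ℝ)] with b hb
    rw [K2 hμ hτ0 hb, K1' hμ hτ0 hb]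
  have hInt2 : IntegrableOn (fun t => t ^ 2 * (μ * dexp μ τ (t - τ))) (Ioi (0:ℝ)) :=
    integrableOn_density hμ hτ0 hq 2
  have hI2 : (∫ t in Ioi (0 : ℝ), t ^ 2 * (μ * dexp μ τ (t - τ)))
      = 2 * (1 - μ * τ) / μ ^ 2 :=
    tendsto_nhds_unique (intervalIntegral_tendsto_integral_Ioi 0 hInt2 tendsto_id) hE2
  refine ⟨hI1, ?_⟩
  rw [hI2, hI1]
  field_simp
  ring
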